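/- Let $G$ be a subgroup of $\mathfrak{S}_{N_1} \times \mathfrak{S}_{N_2}$ with $N_1, N_2 > 2$, such that both projections $p_i : G \to \mathfrak{S}_{N_i}$ are surjective and $G$ contains the element $((1\,2), (1\,2))$. If the stabilizer in $G$ of the point $(1,1) \in \{1,\dots,N_1\} \times \{1,\dots,N_2\}$ has index strictly less than $N_1 N_2$ in $G$, then $N_1 = N_2$ and $G$ is conjugate (by an inner automorphism of one factor) to the diagonal subgroup $\Delta \subset \mathfrak{S}_N \times \mathfrak{S}_N$. -/

import Mathlib

open Equiv Equiv.Perm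

private lemma conj_swap {α : Type*} [DecidableEq α] (f : Perm α) (x y : α) :
    f * swap x y * f⁻¹ = swap (f x) (f y) := (swap_apply_apply f x y).symm

/-- A nontrivial normal subgroup of a symmetric group acts transitively. -/
private lemma normal_trans {α : Type*} [DecidableEq α] (H : Subgroup (Perm α)) [hN : H.Normal]
    (hne : H ≠ ⊥) (a b : α) : ∃ g ∈ H, g a = b := by
  obtain ⟨h, hH, h1⟩ : ∃ h ∈ H, h ≠ 1 := by
    by_contra hc
    push_neg at hc
    exact hne ((Subgroup.eq_bot_iff_forall H).mpr hc)
  obtain ⟨x, hx⟩ : ∃ x, h x ≠ x := by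
    by_contra hc
    push_neg at hc
    exact h1 (Equiv.ext hc)
  -- first: an element of H moving a
  have hmove : ∃ h' ∈ H, h' a ≠ a := by
    rcases eq_or_ne a x with rfl | hax
    · exact ⟨h, hH, hx⟩
    · set g : Perm α := swap (h x) a * h * (swap (h x) a)⁻¹ with hg
      have hval : g x = a := by
        rw [hg, swap_inv]
        simp only [Perm.mul_apply]
        rw [swap_apply_of_ne_of_ne (Ne.symm hx) (Ne.symm hax), swap_apply_left]
      refine ⟨g⁻¹, H.inv_mem (hg ▸ hN.conj_mem h hH _), ?_⟩
      have h2 : g⁻¹ a = x := by rw [← hval, Perm.coe_inv, Equiv.symm_apply_apply]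
      rw [h2]
      exact Ne.symm hax
  rcases eq_or_ne a b with rfl | hab
  · exact ⟨1, H.one_mem, rfl⟩
  obtain ⟨h', hH', ha⟩ := hmove
  refine ⟨swap (h' a) b * h' * (swap (h' a) b)⁻¹, hN.conj_mem h' hH' _, ?_⟩
  rw [swap_inv]
  simp only [Perm.mul_apply]
  rw [swap_apply_of_ne_of_ne (Ne.symm ha) hab, swap_apply_left]

/-- A permutation with two prescribed values. -/
private lemma exists_perm_two {α : Type*} [DecidableEq α] {a b x y : α} (hab : a ≠ b)
    (hxy : x ≠ y) : ∃ ρ : Perm α, ρ a = x ∧ ρ b = y := by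
  refine ⟨swap (swap a x b) y * swap a x, ?_, ?_⟩
  · simp only [Perm.mul_apply, swap_apply_left]
    refine swap_apply_of_ne_of_ne (fun hc => ?_) hxy
    apply hab
    have := congrArg (swap a x) hc
    rwa [swap_apply_right, swap_apply_self] at this
  · simp only [Perm.mul_apply, swap_apply_left]

private lemma aut_inner {α : Type*} [Fintype α] [DecidableEq α] (φ : Perm α ≃* Perm α)
    {a b : α} (hab : a ≠ b) (h01 : φ (swap a b) = swap a b) :
    ∃ τ : Perm α, ∀ σ, φ σ = τ * σ * τ⁻¹ := by
  -- φ sends star transpositions to transpositions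
  have hT : ∀ i, i ≠ a → ∃ u v, u ≠ v ∧ φ (swap a i) = swap u v := by
    intro i hi
    obtain ⟨ρ, hρa, hρb⟩ := exists_perm_two hab (Ne.symm hi : a ≠ i)
    refine ⟨φ ρ a, φ ρ b, (φ ρ).injective.ne hab, ?_⟩
    have h2 : swap a i = ρ * swap a b * ρ⁻¹ := by rw [conj_swap, hρa, hρb]
    rw [h2, map_mul, map_mul, map_inv, h01, conj_swap]
  -- star transpositions do not commute
  have hnc : ∀ i j, i ≠ a → j ≠ a → i ≠ j →
      swap a i * swap a j ≠ swap a j * swap a i := by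
    intro i j hia hja hij hc
    have h3 := Equiv.ext_iff.mp hc i
    simp only [Perm.mul_apply] at h3
    rw [swap_apply_of_ne_of_ne hia hij, swap_apply_right, swap_apply_left] at h3
    exact hja (h3.symm ▸ rfl)
  -- images of distinct star transpositions share a point
  have hcp : ∀ i j, i ≠ a → j ≠ a → i ≠ j → ∀ u v w z, u ≠ v → w ≠ z →
      φ (swap a i) = swap u v → φ (swap a j) = swap w z →
      (u = w ∨ u = z) ∨ (v = w ∨ v = z) := by
    intro i j hia hja hij u v w z huv hwz hTi hTj
    by_contra hcon
    push_neg at hcon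
    obtain ⟨⟨h1, h2⟩, h3, h4⟩ := hcon
    have hd : (swap u v).Disjoint (swap w z) := by
      intro p
      by_cases hp : p = u ∨ p = v
      · right
        rcases hp with rfl | rfl
        · exact swap_apply_of_ne_of_ne h1 h2
        · exact swap_apply_of_ne_of_ne h3 h4
      · left
        push_neg at hp
        exact swap_apply_of_ne_of_ne hp.1 hp.2
    apply hnc i j hia hja hij
    apply φ.injective
    rw [map_mul, map_mul, hTi, hTj, hd.commute.eq]
  -- conjugation formula
  have hconj : ∀ i j, i ≠ a → j ≠ a → i ≠ j →
      φ (swap i j) = φ (swap a i) * φ (swap a j) * (φ (swap a i))⁻¹ := by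
    intro i j hia hja hij
    have h2 : swap i j = swap a i * swap a j * (swap a i)⁻¹ := by
      rw [conj_swap, swap_apply_left, swap_apply_of_ne_of_ne hja (Ne.symm hij)]
    rw [h2, map_mul, map_mul, map_inv]
  -- each image passes through a or through b
  have through_ab : ∀ i, i ≠ a →
      (∃ d, d ≠ a ∧ φ (swap a i) = swap a d) ∨
      (∃ d, d ≠ b ∧ φ (swap a i) = swap b d) := by
    intro i hi
    rcases eq_or_ne i b with h | hib
    · exact Or.inl ⟨b, Ne.symm hab, by rw [h]; exact h01⟩
    obtain ⟨u, v, huv, hTi⟩ := hT i hi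
    rcases hcp i b hi (Ne.symm hab) hib u v a b huv hab hTi h01 with (h | h) | (h | h)
    · rw [h] at hTi huv
      exact Or.inl ⟨v, Ne.symm huv, hTi⟩
    · rw [h] at hTi huv
      exact Or.inr ⟨v, Ne.symm huv, hTi⟩
    · rw [h] at hTi huv
      exact Or.inl ⟨u, huv, by rw [hTi, swap_comm]⟩
    · rw [h] at hTi huv
      exact Or.inr ⟨u, huv, by rw [hTi, swap_comm]⟩
  -- there is a common point c
  have hstar : ∃ c, ∀ i, i ≠ a → ∃ d, d ≠ c ∧ φ (swap a i) = swap c d := by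
    by_cases hA : ∀ i, i ≠ a → ∃ d, d ≠ a ∧ φ (swap a i) = swap a d
    · exact ⟨a, hA⟩
    push_neg at hA
    obtain ⟨i₀, hi₀a, hbad⟩ := hA
    obtain ⟨d₀, hd₀b, hT₀⟩ :=
      (through_ab i₀ hi₀a).resolve_left (by rintro ⟨d, hd, he⟩; exact hbad d hd he)
    have hd₀a : d₀ ≠ a := by
      rintro rfl
      exact hbad b (Ne.symm hab) (by rw [hT₀, swap_comm])
    refine ⟨b, fun i hia => ?_⟩
    rcases through_ab i hia with ⟨d, hda, hTi⟩ | hgood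
    · rcases eq_or_ne d b with rfl | hdb
      · exact ⟨a, hab, by rw [hTi, swap_comm]⟩
      have hii₀ : i ≠ i₀ := by rintro rfl; exact hbad d hda hTi
      have h4 := hcp i i₀ hia hi₀a hii₀ a d b d₀ (Ne.symm hda) (Ne.symm hd₀b) hTi hT₀
      have hdd₀ : d = d₀ := by
        rcases h4 with (h | h) | (h | h)
        · exact absurd h hab
        · exact absurd h (Ne.symm hd₀a)
        · exact absurd h hdb
        · exact h
      subst hdd₀
      exfalso
      have h5 := hconj i i₀ hia hi₀a hii₀
      rw [hTi, hT₀, conj_swap, swap_apply_of_ne_of_ne (Ne.symm hab) (Ne.symm hdb),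
        swap_apply_right] at h5
      have h6 : swap i i₀ = swap a b := φ.injective (by rw [h5, h01, swap_comm])
      have h7 := Equiv.ext_iff.mp h6 a
      rw [swap_apply_of_ne_of_ne (Ne.symm hia) (Ne.symm hi₀a), swap_apply_left] at h7
      exact hab h7
    · exact hgood
  -- construct τ
  obtain ⟨c, hc⟩ := hstar
  choose d hd hTd using hc
  classical
  have hfinj : Function.Injective (fun i => if h : i = a then c else d i h) := by
    intro i j hij
    simp only at hij
    by_cases hi : i = a <;> by_cases hj : j = a
    · rw [hi, hj]
    · rw [dif_pos hi, dif_neg hj] at hij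
      exact absurd hij.symm (hd j hj)
    · rw [dif_neg hi, dif_pos hj] at hij
      exact absurd hij (hd i hi)
    · rw [dif_neg hi, dif_neg hj] at hij
      have h7 : swap a i = swap a j := φ.injective (by rw [hTd i hi, hTd j hj, hij])
      by_contra hne
      have h8 := Equiv.ext_iff.mp h7 i
      rw [swap_apply_right, swap_apply_of_ne_of_ne hi hne] at h8
      exact hi h8.symm
  set τ : Perm α := Equiv.ofBijective _ (Finite.injective_iff_bijective.mp hfinj) with hτ
  have hτa : τ a = c := dif_pos rfl
  have hτi : ∀ i (h : i ≠ a), τ i = d i h := fun i h => dif_neg h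
  have hbase : ∀ i, i ≠ a → φ (swap a i) = τ * swap a i * τ⁻¹ := by
    intro i h
    rw [conj_swap, hτa, hτi i h, hTd i h]
  have hgen : Subgroup.closure {σ : Perm α | ∃ i, i ≠ a ∧ σ = swap a i} = ⊤ := by
    rw [eq_top_iff, ← Equiv.Perm.closure_isSwap]
    apply Subgroup.closure_le _ |>.mpr
    rintro σ ⟨x, y, hxy, rfl⟩
    rcases eq_or_ne x a with rfl | hxa
    · exact Subgroup.subset_closure ⟨y, Ne.symm hxy, rfl⟩
    rcases eq_or_ne y a with rfl | hya
    · rw [swap_comm]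
      exact Subgroup.subset_closure ⟨x, hxa, rfl⟩
    · have h9 : swap x y = swap a x * swap a y * (swap a x)⁻¹ := by
        rw [conj_swap, swap_apply_left, swap_apply_of_ne_of_ne hya (Ne.symm hxy)]
      rw [h9]
      exact mul_mem (mul_mem (Subgroup.subset_closure ⟨x, hxa, rfl⟩)
        (Subgroup.subset_closure ⟨y, hya, rfl⟩))
        (inv_mem (Subgroup.subset_closure ⟨x, hxa, rfl⟩))
  refine ⟨τ, fun σ => ?_⟩
  have hmem : σ ∈ Subgroup.closure {σ : Perm α | ∃ i, i ≠ a ∧ σ = swap a i} :=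
    hgen ▸ Subgroup.mem_top σ
  induction hmem using Subgroup.closure_induction with
  | mem x hx =>
    obtain ⟨i, hi, rfl⟩ := hx
    exact hbase i hi
  | one => rw [map_one]; group
  | mul x y hx hy ihx ihy => rw [map_mul, ihx, ihy]; group
  | inv x hx ih => rw [map_inv, ih]; group

/-- Lemma 9 of Kulikov's paper: a subgroup `G` of `S_{N₁} × S_{N₂}` (`N₁, N₂ > 2`) with both
projections surjective and containing the pair of transpositions `((1 2), (1 2))`, whose
stabilizer of the point `(1,1)` has index `< N₁ N₂`, must have `N₁ = N₂` and be a diagonal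
subgroup up to an inner automorphism of one factor. -/
theorem stmt0 (N₁ N₂ : ℕ) (h₁ : 2 < N₁) (h₂ : 2 < N₂)
    (G : Subgroup (Equiv.Perm (Fin N₁) × Equiv.Perm (Fin N₂)))
    (hs₁ : Function.Surjective ((MonoidHom.fst (Equiv.Perm (Fin N₁)) (Equiv.Perm (Fin N₂))).comp
      G.subtype))
    (hs₂ : Function.Surjective ((MonoidHom.snd (Equiv.Perm (Fin N₁)) (Equiv.Perm (Fin N₂))).comp
      G.subtype))
    (hswap : (Equiv.swap (⟨0, by omega⟩ : Fin N₁) ⟨1, by omega⟩,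
              Equiv.swap (⟨0, by omega⟩ : Fin N₂) ⟨1, by omega⟩) ∈ G)
    (hidx : (Subgroup.comap
        ((MonoidHom.fst (Equiv.Perm (Fin N₁)) (Equiv.Perm (Fin N₂))).comp G.subtype)
        (MulAction.stabilizer (Equiv.Perm (Fin N₁)) (⟨0, by omega⟩ : Fin N₁)) ⊓
      Subgroup.comap
        ((MonoidHom.snd (Equiv.Perm (Fin N₁)) (Equiv.Perm (Fin N₂))).comp G.subtype)
        (MulAction.stabilizer (Equiv.Perm (Fin N₂)) (⟨0, by omega⟩ : Fin N₂))).index < N₁ * N₂) :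
    ∃ (e : N₁ = N₂) (τ : Equiv.Perm (Fin N₂)),
      ∀ x : Equiv.Perm (Fin N₁) × Equiv.Perm (Fin N₂),
        x ∈ G ↔ x.2 = τ * (Equiv.permCongr (finCongr e) x.1) * τ⁻¹ := by
  classical
  set S := Subgroup.comap
        ((MonoidHom.fst (Equiv.Perm (Fin N₁)) (Equiv.Perm (Fin N₂))).comp G.subtype)
        (MulAction.stabilizer (Equiv.Perm (Fin N₁)) (⟨0, by omega⟩ : Fin N₁)) ⊓
      Subgroup.comap
        ((MonoidHom.snd (Equiv.Perm (Fin N₁)) (Equiv.Perm (Fin N₂))).comp G.subtype)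
        (MulAction.stabilizer (Equiv.Perm (Fin N₂)) (⟨0, by omega⟩ : Fin N₂)) with hSdef
  have hSmem : ∀ y : G, y ∈ S ↔
      ((y : Equiv.Perm (Fin N₁) × Equiv.Perm (Fin N₂)).1 ⟨0, by omega⟩ = ⟨0, by omega⟩ ∧
       (y : Equiv.Perm (Fin N₁) × Equiv.Perm (Fin N₂)).2 ⟨0, by omega⟩ = ⟨0, by omega⟩) := by
    intro y
    rw [hSdef]
    simp [Subgroup.mem_inf, Subgroup.mem_comap, MulAction.mem_stabilizer_iff, Equiv.Perm.smul_def]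
  -- transitivity on the product would contradict the index bound
  have hbig : ¬ ∀ (i : Fin N₁) (j : Fin N₂), ∃ g, g ∈ G ∧
      g.1 ⟨0, by omega⟩ = i ∧ g.2 ⟨0, by omega⟩ = j := by
    intro htrans
    choose g hg hg1 hg2 using fun q : Fin N₁ × Fin N₂ => htrans q.1 q.2
    have hinj : Function.Injective
        (fun q : Fin N₁ × Fin N₂ => (QuotientGroup.mk (⟨g q, hg q⟩ : G) : G ⧸ S)) := by
      intro q r hqr
      simp only [QuotientGroup.eq] at hqr
      rw [hSmem] at hqr
      obtain ⟨hl, hr⟩ := hqr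
      simp only [Subgroup.coe_mul, Subgroup.coe_inv, Prod.fst_mul, Prod.fst_inv,
        Prod.snd_mul, Prod.snd_inv, Equiv.Perm.mul_apply] at hl hr
      have e1 : q.1 = r.1 := by
        rw [← hg1 q, ← hg1 r]
        have := congrArg (g q).1 hl
        rw [Equiv.Perm.coe_inv, Equiv.apply_symm_apply] at this
        exact this.symm
      have e2 : q.2 = r.2 := by
        rw [← hg2 q, ← hg2 r]
        have := congrArg (g q).2 hr
        rw [Equiv.Perm.coe_inv, Equiv.apply_symm_apply] at this
        exact this.symm
      exact Prod.ext_iff.mpr ⟨e1, e2⟩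
    have hcard := Nat.card_le_card_of_injective _ hinj
    have hc1 : Nat.card (Fin N₁ × Fin N₂) = N₁ * N₂ := by
      simp [Nat.card_eq_fintype_card]
    have hc2 : Nat.card (G ⧸ S) = S.index := rfl
    rw [hc1, hc2] at hcard
    omega
  -- the two kernels
  set K₁ : Subgroup (Equiv.Perm (Fin N₁)) :=
    { carrier := {σ | ((σ, 1) : Equiv.Perm (Fin N₁) × Equiv.Perm (Fin N₂)) ∈ G}
      one_mem' := G.one_mem
      mul_mem' := fun {x y} hx hy => by
        have := G.mul_mem hx hy
        simpa using this
      inv_mem' := fun {x} hx => by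
        have := G.inv_mem hx
        simpa using this } with hK₁def
  set K₂ : Subgroup (Equiv.Perm (Fin N₂)) :=
    { carrier := {ρ | ((1, ρ) : Equiv.Perm (Fin N₁) × Equiv.Perm (Fin N₂)) ∈ G}
      one_mem' := G.one_mem
      mul_mem' := fun {x y} hx hy => by
        have := G.mul_mem hx hy
        simpa using this
      inv_mem' := fun {x} hx => by
        have := G.inv_mem hx
        simpa using this } with hK₂def
  haveI hK₁n : K₁.Normal := by
    constructor
    intro σ hσ h
    obtain ⟨y, hy⟩ := hs₁ h
    obtain ⟨u, hu⟩ := y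
    have h1 : u.1 = h := hy
    have hm := G.mul_mem (G.mul_mem hu hσ) (G.inv_mem hu)
    have heq : u * (σ, 1) * u⁻¹ = (h * σ * h⁻¹, 1) := by
      rw [← h1]
      simp [Prod.ext_iff, Prod.fst_mul, Prod.snd_mul, Prod.fst_inv, Prod.snd_inv]
    show ((h * σ * h⁻¹, 1) : Equiv.Perm (Fin N₁) × Equiv.Perm (Fin N₂)) ∈ G
    rw [← heq]; exact hm
  haveI hK₂n : K₂.Normal := by
    constructor
    intro ρ hρ h
    obtain ⟨y, hy⟩ := hs₂ h
    obtain ⟨u, hu⟩ := y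
    have h1 : u.2 = h := hy
    have hm := G.mul_mem (G.mul_mem hu hρ) (G.inv_mem hu)
    have heq : u * (1, ρ) * u⁻¹ = (1, h * ρ * h⁻¹) := by
      rw [← h1]
      simp [Prod.ext_iff, Prod.fst_mul, Prod.snd_mul, Prod.fst_inv, Prod.snd_inv]
    show ((1, h * ρ * h⁻¹) : Equiv.Perm (Fin N₁) × Equiv.Perm (Fin N₂)) ∈ G
    rw [← heq]; exact hm
  -- both kernels are trivial
  have hK₂b : K₂ = ⊥ := by
    by_contra hne
    apply hbig
    intro i j
    obtain ⟨y, hy⟩ := hs₁ (Equiv.swap (⟨0, by omega⟩ : Fin N₁) i)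
    obtain ⟨k, hk, hka⟩ := normal_trans K₂ hne
      ((↑y : Equiv.Perm (Fin N₁) × Equiv.Perm (Fin N₂)).2 ⟨0, by omega⟩) j
    have h1 : (↑y : Equiv.Perm (Fin N₁) × Equiv.Perm (Fin N₂)).1
        = Equiv.swap (⟨0, by omega⟩ : Fin N₁) i := hy
    refine ⟨((1 : Equiv.Perm (Fin N₁)), k) * ↑y, G.mul_mem hk y.2, ?_, ?_⟩
    · rw [Prod.fst_mul, h1]
      simp [Equiv.swap_apply_left]
    · rw [Prod.snd_mul, Equiv.Perm.mul_apply, hka]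
  have hK₁b : K₁ = ⊥ := by
    by_contra hne
    apply hbig
    intro i j
    obtain ⟨y, hy⟩ := hs₂ (Equiv.swap (⟨0, by omega⟩ : Fin N₂) j)
    obtain ⟨k, hk, hka⟩ := normal_trans K₁ hne
      ((↑y : Equiv.Perm (Fin N₁) × Equiv.Perm (Fin N₂)).1 ⟨0, by omega⟩) i
    have h1 : (↑y : Equiv.Perm (Fin N₁) × Equiv.Perm (Fin N₂)).2
        = Equiv.swap (⟨0, by omega⟩ : Fin N₂) j := hy
    refine ⟨(k, (1 : Equiv.Perm (Fin N₂))) * ↑y, G.mul_mem hk y.2, ?_, ?_⟩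
    · rw [Prod.fst_mul, Equiv.Perm.mul_apply, hka]
    · rw [Prod.snd_mul, h1]
      simp [Equiv.swap_apply_left]
  -- the projections are bijective
  have hinj₁ : Function.Injective
      ((MonoidHom.fst (Equiv.Perm (Fin N₁)) (Equiv.Perm (Fin N₂))).comp G.subtype) := by
    rw [injective_iff_map_eq_one]
    intro y hy
    have hy' : (↑y : Equiv.Perm (Fin N₁) × Equiv.Perm (Fin N₂)).1 = 1 := hy
    have h2 : (↑y : Equiv.Perm (Fin N₁) × Equiv.Perm (Fin N₂)).2 ∈ K₂ := by
      show ((1, (↑y : Equiv.Perm (Fin N₁) × Equiv.Perm (Fin N₂)).2) :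
        Equiv.Perm (Fin N₁) × Equiv.Perm (Fin N₂)) ∈ G
      have h3 : (((↑y : Equiv.Perm (Fin N₁) × Equiv.Perm (Fin N₂)).1,
          (↑y : Equiv.Perm (Fin N₁) × Equiv.Perm (Fin N₂)).2) :
          Equiv.Perm (Fin N₁) × Equiv.Perm (Fin N₂)) ∈ G := by
        simpa using y.2
      rwa [hy'] at h3
    rw [hK₂b, Subgroup.mem_bot] at h2
    exact Subtype.ext (Prod.ext_iff.mpr ⟨hy', h2⟩)
  have hinj₂ : Function.Injective
      ((MonoidHom.snd (Equiv.Perm (Fin N₁)) (Equiv.Perm (Fin N₂))).comp G.subtype) := by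
    rw [injective_iff_map_eq_one]
    intro y hy
    have hy' : (↑y : Equiv.Perm (Fin N₁) × Equiv.Perm (Fin N₂)).2 = 1 := hy
    have h2 : (↑y : Equiv.Perm (Fin N₁) × Equiv.Perm (Fin N₂)).1 ∈ K₁ := by
      show (((↑y : Equiv.Perm (Fin N₁) × Equiv.Perm (Fin N₂)).1, 1) :
        Equiv.Perm (Fin N₁) × Equiv.Perm (Fin N₂)) ∈ G
      have h3 : (((↑y : Equiv.Perm (Fin N₁) × Equiv.Perm (Fin N₂)).1,
          (↑y : Equiv.Perm (Fin N₁) × Equiv.Perm (Fin N₂)).2) :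
          Equiv.Perm (Fin N₁) × Equiv.Perm (Fin N₂)) ∈ G := by
        simpa using y.2
      rwa [hy'] at h3
    rw [hK₁b, Subgroup.mem_bot] at h2
    exact Subtype.ext (Prod.ext_iff.mpr ⟨h2, hy'⟩)
  set e₁ : G ≃* Equiv.Perm (Fin N₁) := MulEquiv.ofBijective _ ⟨hinj₁, hs₁⟩ with he₁def
  set e₂ : G ≃* Equiv.Perm (Fin N₂) := MulEquiv.ofBijective _ ⟨hinj₂, hs₂⟩ with he₂def
  have he₁ : ∀ y : G, e₁ y = (↑y : Equiv.Perm (Fin N₁) × Equiv.Perm (Fin N₂)).1 :=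
    fun y => rfl
  have he₂ : ∀ y : G, e₂ y = (↑y : Equiv.Perm (Fin N₁) × Equiv.Perm (Fin N₂)).2 :=
    fun y => rfl
  have hmem : ∀ x : Equiv.Perm (Fin N₁) × Equiv.Perm (Fin N₂),
      x ∈ G ↔ x.2 = e₂ (e₁.symm x.1) := by
    intro x
    constructor
    · intro hx
      have h3 : e₁.symm x.1 = ⟨x, hx⟩ := by
        apply e₁.injective
        rw [MulEquiv.apply_symm_apply, he₁]
      rw [h3, he₂]
    · intro hx
      have h4 : (↑(e₁.symm x.1) : Equiv.Perm (Fin N₁) × Equiv.Perm (Fin N₂)) = x := by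
        refine Prod.ext_iff.mpr ⟨?_, ?_⟩
        · rw [← he₁ (e₁.symm x.1), MulEquiv.apply_symm_apply]
        · rw [← he₂ (e₁.symm x.1), ← hx]
      rw [← h4]
      exact (e₁.symm x.1).2
  have hcard : Nat.card (Equiv.Perm (Fin N₁)) = Nat.card (Equiv.Perm (Fin N₂)) :=
    Nat.card_eq_of_bijective _ (e₁.symm.trans e₂).bijective
  simp only [Nat.card_eq_fintype_card, Fintype.card_perm, Fintype.card_fin] at hcard
  have hNN : N₁ = N₂ := (Nat.factorial_inj (by omega)).mp hcard
  subst hNN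
  have hswap' := (hmem _).mp hswap
  have hab : (⟨0, by omega⟩ : Fin N₁) ≠ ⟨1, by omega⟩ := by simp [Fin.ext_iff]
  obtain ⟨τ, hτ⟩ := aut_inner (e₁.symm.trans e₂) hab hswap'.symm
  refine ⟨rfl, τ, fun x => ?_⟩
  have hpc : Equiv.permCongr (finCongr (rfl : N₁ = N₁)) x.1 = x.1 := by
    ext z; simp
  rw [hmem x, hpc, show e₂ (e₁.symm x.1) = (e₁.symm.trans e₂) x.1 from rfl, hτ x.1]
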